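/- arXiv:1110.4925 — 3 statements merged into one kernel-verified Lean document; each statement's English description precedes it below -/
import Mathlib

section
/- Let T = [t1 t2; t3 t4] with nonnegative entries summing to 1 and satisfying t1·t4 = t2·t3 (equivalently t1/t2 = t3/t4 when t2,t4 > 0). Then the ℓ-fold Kronecker power P_SKG of T equals the rank-one matrix P_CL defined by P_CL(i,j) = (t1+t2)^{z_i}(t3+t4)^{ℓ-z_i}(t1+t3)^{z_j}(t2+t4)^{ℓ-z_j}, where z_i and z_j are the number of zero bits in the ℓ-bit representations of i and j. That is, P_SKG(i,j) = P_CL(i,j) for all i, j ∈ {0,...,2^ℓ-1}. -/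
open Finset

noncomputable section

/-- The ℓ-fold Kronecker power of a 2×2 real matrix, indexed by `Fin (2^ℓ)`,
identifying an index with its ℓ-bit binary representation. -/
def kronPow : (ℓ : ℕ) → Matrix (Fin 2) (Fin 2) ℝ → Matrix (Fin (2 ^ ℓ)) (Fin (2 ^ ℓ)) ℝ
  | 0, _ => 1
  | ℓ + 1, T => fun i j =>
      T ⟨i.val / 2 ^ ℓ, Nat.div_lt_of_lt_mul (pow_succ 2 ℓ ▸ i.isLt)⟩
        ⟨j.val / 2 ^ ℓ, Nat.div_lt_of_lt_mul (pow_succ 2 ℓ ▸ j.isLt)⟩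
      * kronPow ℓ T
          ⟨i.val % 2 ^ ℓ, Nat.mod_lt _ (by positivity)⟩
          ⟨j.val % 2 ^ ℓ, Nat.mod_lt _ (by positivity)⟩

/-- Number of zero bits among the ℓ low-order bits of `i`. -/
def zeroBits (ℓ i : ℕ) : ℕ :=
  ((Finset.range ℓ).filter (fun k => i / 2 ^ k % 2 = 0)).card

/-- Number of bit positions (among the ℓ low-order ones) where both `i` and `j` have bit zero. -/
def commonZeros (ℓ i j : ℕ) : ℕ :=
  ((Finset.range ℓ).filter (fun k => i / 2 ^ k % 2 = 0 ∧ j / 2 ^ k % 2 = 0)).card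

lemma bit_mod {ℓ k i : ℕ} (hk : k < ℓ) : (i % 2 ^ ℓ) / 2 ^ k % 2 = i / 2 ^ k % 2 := by
  have h : 2 ^ ℓ = 2 ^ k * 2 ^ (ℓ - k) := by
    rw [← pow_add]; congr 1; omega
  rw [h, Nat.mod_mul_right_div_self]
  have h2 : (2 : ℕ) ∣ 2 ^ (ℓ - k) := dvd_pow_self 2 (by omega)
  exact Nat.mod_mod_of_dvd _ h2

lemma zeroBits_mod (ℓ i : ℕ) : zeroBits ℓ (i % 2 ^ ℓ) = zeroBits ℓ i := by
  unfold zeroBits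
  congr 1
  apply Finset.filter_congr
  intro k hk
  rw [bit_mod (Finset.mem_range.mp hk)]

lemma zeroBits_le (ℓ i : ℕ) : zeroBits ℓ i ≤ ℓ := by
  simpa [zeroBits] using (Finset.card_filter_le (Finset.range ℓ) _)

lemma zeroBits_succ (ℓ i : ℕ) :
    zeroBits (ℓ + 1) i = zeroBits ℓ i + (if i / 2 ^ ℓ % 2 = 0 then 1 else 0) := by
  unfold zeroBits
  rw [Finset.range_add_one, Finset.filter_insert]
  split
  · rw [Finset.card_insert_of_notMem (by simp)]
  · simp

lemma T_factor (T : Matrix (Fin 2) (Fin 2) ℝ)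
    (hsum : T 0 0 + T 0 1 + T 1 0 + T 1 1 = 1)
    (hdet : T 0 0 * T 1 1 = T 0 1 * T 1 0) (a b : Fin 2) :
    T a b = (T a 0 + T a 1) * (T 0 b + T 1 b) := by
  fin_cases a <;> fin_cases b <;>
      simp only [Fin.isValue, Fin.zero_eta, Fin.mk_one]
  · linear_combination (-(T 0 0))*hsum + hdet
  · linear_combination (-(T 0 1))*hsum - hdet
  · linear_combination (-(T 1 0))*hsum - hdet
  · linear_combination (-(T 1 1))*hsum + hdet

theorem skg_eq_cl (ℓ : ℕ) (T : Matrix (Fin 2) (Fin 2) ℝ)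
    (hnn : ∀ a b, 0 ≤ T a b)
    (hsum : T 0 0 + T 0 1 + T 1 0 + T 1 1 = 1)
    (hdet : T 0 0 * T 1 1 = T 0 1 * T 1 0) (i j : Fin (2 ^ ℓ)) :
    kronPow ℓ T i j =
      (T 0 0 + T 0 1) ^ zeroBits ℓ i.val * (T 1 0 + T 1 1) ^ (ℓ - zeroBits ℓ i.val) *
      (T 0 0 + T 1 0) ^ zeroBits ℓ j.val * (T 0 1 + T 1 1) ^ (ℓ - zeroBits ℓ j.val) := by
  induction ℓ with
  | zero =>
      have hij : i = j := Fin.ext (by omega)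
      subst hij
      simp [kronPow, zeroBits, Matrix.one_apply]
  | succ ℓ IH =>
      rw [show kronPow (ℓ+1) T i j =
        T ⟨i.val / 2 ^ ℓ, Nat.div_lt_of_lt_mul (pow_succ 2 ℓ ▸ i.isLt)⟩
          ⟨j.val / 2 ^ ℓ, Nat.div_lt_of_lt_mul (pow_succ 2 ℓ ▸ j.isLt)⟩
        * kronPow ℓ T ⟨i.val % 2 ^ ℓ, Nat.mod_lt _ (by positivity)⟩
            ⟨j.val % 2 ^ ℓ, Nat.mod_lt _ (by positivity)⟩ from rfl]
      rw [IH ⟨i.val % 2 ^ ℓ, Nat.mod_lt _ (by positivity)⟩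
            ⟨j.val % 2 ^ ℓ, Nat.mod_lt _ (by positivity)⟩]
      simp only [zeroBits_mod]
      rw [T_factor T hsum hdet]
      have hia : (i.val / 2 ^ ℓ) % 2 = i.val / 2 ^ ℓ :=
        Nat.mod_eq_of_lt (Nat.div_lt_of_lt_mul (pow_succ 2 ℓ ▸ i.isLt))
      have hja : (j.val / 2 ^ ℓ) % 2 = j.val / 2 ^ ℓ :=
        Nat.mod_eq_of_lt (Nat.div_lt_of_lt_mul (pow_succ 2 ℓ ▸ j.isLt))
      have hzi := zeroBits_le ℓ i.val
      have hzj := zeroBits_le ℓ j.val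
      rw [zeroBits_succ ℓ i.val, zeroBits_succ ℓ j.val]
      have hi2 : i.val / 2 ^ ℓ < 2 := Nat.div_lt_of_lt_mul (pow_succ 2 ℓ ▸ i.isLt)
      have hj2 : j.val / 2 ^ ℓ < 2 := Nat.div_lt_of_lt_mul (pow_succ 2 ℓ ▸ j.isLt)
      rcases (show i.val / 2 ^ ℓ = 0 ∨ i.val / 2 ^ ℓ = 1 by omega) with hi0 | hi0 <;>
        rcases (show j.val / 2 ^ ℓ = 0 ∨ j.val / 2 ^ ℓ = 1 by omega) with hj0 | hj0 <;>
          simp only [hi0, hj0] <;> norm_num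
      · rw [show ℓ + 1 - (zeroBits ℓ i.val + 1) = ℓ - zeroBits ℓ i.val by omega,
            show ℓ + 1 - (zeroBits ℓ j.val + 1) = ℓ - zeroBits ℓ j.val by omega]
        ring
      · rw [show ℓ + 1 - (zeroBits ℓ i.val + 1) = ℓ - zeroBits ℓ i.val by omega,
            show ℓ + 1 - zeroBits ℓ j.val = (ℓ - zeroBits ℓ j.val) + 1 by omega]
        ring
      · rw [show ℓ + 1 - zeroBits ℓ i.val = (ℓ - zeroBits ℓ i.val) + 1 by omega,
            show ℓ + 1 - (zeroBits ℓ j.val + 1) = ℓ - zeroBits ℓ j.val by omega]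
        ring
      · rw [show ℓ + 1 - zeroBits ℓ i.val = (ℓ - zeroBits ℓ i.val) + 1 by omega,
            show ℓ + 1 - zeroBits ℓ j.val = (ℓ - zeroBits ℓ j.val) + 1 by omega]
        ring
end
end

section
/- Let T = [t1 t2; t3 t4] with positive entries summing to 1, and suppose t1·t4 ≠ t2·t3. Then for every ℓ ≥ 1 there exist indices i, j ∈ {0,...,2^ℓ-1} such that P_SKG(i,j) ≠ P_CL(i,j), where P_SKG is the ℓ-fold Kronecker power of T and P_CL(i,j) = (Σ_k P_SKG(i,k))·(Σ_k P_SKG(k,j)). -/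
open Finset

noncomputable section

lemma corner_lt (ℓ : ℕ) (a : Fin 2) : (2 ^ ℓ - 1) * a.val < 2 ^ ℓ := by
  have h1 : 1 ≤ 2 ^ ℓ := Nat.one_le_two_pow
  have := a.isLt
  calc (2 ^ ℓ - 1) * a.val ≤ (2 ^ ℓ - 1) * 1 := Nat.mul_le_mul_left _ (by omega)
    _ < 2 ^ ℓ := by omega

lemma corner (ℓ : ℕ) (T : Matrix (Fin 2) (Fin 2) ℝ) (a b : Fin 2) :
    kronPow ℓ T ⟨(2 ^ ℓ - 1) * a.val, corner_lt ℓ a⟩ ⟨(2 ^ ℓ - 1) * b.val, corner_lt ℓ b⟩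
      = T a b ^ ℓ := by
  induction ℓ with
  | zero =>
    simp [kronPow, Matrix.one_apply]
  | succ n ih =>
    have h1 : 1 ≤ 2 ^ n := Nat.one_le_two_pow
    have hdiv : ∀ c : Fin 2, (2 ^ (n + 1) - 1) * c.val / 2 ^ n = c.val := by
      intro c
      fin_cases c
      · simp
      · simp only [Fin.val_one, mul_one]
        rw [pow_succ]
        have : 2 ^ n * 2 - 1 = (2 ^ n - 1) + 1 * 2 ^ n := by omega
        rw [this, Nat.add_mul_div_right _ _ (by omega : 0 < 2 ^ n),
          Nat.div_eq_of_lt (by omega)]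
    have hmod : ∀ c : Fin 2, (2 ^ (n + 1) - 1) * c.val % 2 ^ n = (2 ^ n - 1) * c.val := by
      intro c
      fin_cases c
      · simp
      · simp only [Fin.val_one, mul_one]
        rw [pow_succ]
        have : 2 ^ n * 2 - 1 = (2 ^ n - 1) + 1 * 2 ^ n := by omega
        rw [this, Nat.add_mul_mod_self_right, Nat.mod_eq_of_lt (by omega)]
    show T _ _ * kronPow n T _ _ = T a b ^ (n + 1)
    simp only [hdiv, hmod, Fin.eta]
    rw [ih, ← pow_succ']

theorem skg_ne_cl (ℓ : ℕ) (hl : 1 ≤ ℓ) (T : Matrix (Fin 2) (Fin 2) ℝ)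
    (hpos : ∀ a b, 0 < T a b)
    (hsum : T 0 0 + T 0 1 + T 1 0 + T 1 1 = 1)
    (hdet : T 0 0 * T 1 1 ≠ T 0 1 * T 1 0) :
    ∃ i j : Fin (2 ^ ℓ), kronPow ℓ T i j ≠
      (∑ k, kronPow ℓ T i k) * (∑ k, kronPow ℓ T k j) := by
  by_contra h
  push_neg at h
  set e : Fin 2 → Fin (2 ^ ℓ) := fun a => ⟨(2 ^ ℓ - 1) * a.val, corner_lt ℓ a⟩ with he
  have key : ∀ a b : Fin 2, T a b ^ ℓ =
      (∑ k, kronPow ℓ T (e a) k) * (∑ k, kronPow ℓ T k (e b)) := by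
    intro a b
    rw [← corner ℓ T a b]
    exact h (e a) (e b)
  have h00 := key 0 0
  have h01 := key 0 1
  have h10 := key 1 0
  have h11 := key 1 1
  have hmul : T 0 0 ^ ℓ * T 1 1 ^ ℓ = T 0 1 ^ ℓ * T 1 0 ^ ℓ := by
    rw [h00, h11, h01, h10]; ring
  rw [← mul_pow, ← mul_pow] at hmul
  have := (pow_left_inj₀ (le_of_lt (by have := hpos 0 0; have := hpos 1 1; positivity))
    (le_of_lt (by have := hpos 0 1; have := hpos 1 0; positivity))
    (by omega : ℓ ≠ 0)).mp hmul
  exact hdet this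
end
end

section
/- Let T = [t1 t2; t3 t4] with positive entries summing to 1, and let P_SKG be its ℓ-fold Kronecker power and P_CL(i,j) = (t1+t2)^{z_i}(t3+t4)^{ℓ-z_i}(t1+t3)^{z_j}(t2+t4)^{ℓ-z_j} the associated Chung-Lu matrix. Then P_SKG and P_CL have identical row sums and identical column sums: for every i, Σ_j P_SKG(i,j) = Σ_j P_CL(i,j), and for every j, Σ_i P_SKG(i,j) = Σ_i P_CL(i,j). -/
open Finset

noncomputable section

lemma mem_bound (ℓ : ℕ) (a : Fin 2) (b : Fin (2^ℓ)) : b.val + 2^ℓ * a.val < 2^(ℓ+1) := by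
  have ha := a.isLt; have hb := b.isLt
  have h1 : 2 ^ ℓ * a.val ≤ 2 ^ ℓ * 1 := Nat.mul_le_mul_left _ (by omega)
  have h2 : 2 ^ (ℓ+1) = 2 ^ ℓ * 2 := pow_succ 2 ℓ
  omega

lemma sum_split (ℓ : ℕ) (f : Fin (2^(ℓ+1)) → ℝ) :
    ∑ x : Fin (2^(ℓ+1)), f x =
      ∑ a : Fin 2, ∑ b : Fin (2^ℓ), f ⟨b.val + 2^ℓ * a.val, mem_bound ℓ a b⟩ := by
  have hpow : 2 * 2^ℓ = 2^(ℓ+1) := by rw [pow_succ]; ring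
  rw [show (∑ x : Fin (2^(ℓ+1)), f x) =
      ∑ p : Fin 2 × Fin (2^ℓ), f ⟨p.2.val + 2^ℓ * p.1.val, mem_bound ℓ p.1 p.2⟩ from
    (Fintype.sum_equiv (finProdFinEquiv.trans (finCongr hpow)) _ f
      (fun p => congrArg f (Fin.ext (by simp)))).symm,
    Fintype.sum_prod_type]

lemma hi_eq (ℓ a b : ℕ) (ha : a < 2) (hb : b < 2^ℓ) : (b + 2^ℓ * a) / 2^ℓ = a := by
  rw [Nat.add_mul_div_left _ _ (by positivity : 0 < 2^ℓ), Nat.div_eq_of_lt hb,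
    Nat.zero_add]

lemma lo_eq (ℓ a b : ℕ) (hb : b < 2^ℓ) : (b + 2^ℓ * a) % 2^ℓ = b := by
  rw [Nat.add_mul_mod_self_left, Nat.mod_eq_of_lt hb]

lemma bit_lo (ℓ k a b : ℕ) (hk : k < ℓ) (hb : b < 2^ℓ) :
    (b + 2^ℓ * a) / 2^k % 2 = b / 2^k % 2 := by
  have h2 : 2^ℓ = 2^k * 2^(ℓ-k) := by rw [← pow_add]; congr 1; omega
  have hdiv : (b + 2^ℓ * a) / 2^k = b / 2^k + 2^(ℓ-k) * a := by
    rw [h2, mul_assoc, Nat.add_mul_div_left _ _ (by positivity : 0 < 2^k)]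
  rw [hdiv]
  have h3 : 2^(ℓ-k) = 2 * 2^(ℓ-k-1) := by
    rw [← pow_succ']; congr 1; omega
  rw [h3]
  set y := 2^(ℓ-k-1) * a with hy
  have : 2 * 2^(ℓ-k-1) * a = 2 * y := by rw [hy]; ring
  rw [this]
  omega

lemma zeroBits_split (ℓ a b : ℕ) (ha : a < 2) (hb : b < 2^ℓ) :
    zeroBits (ℓ+1) (b + 2^ℓ * a) = zeroBits ℓ b + (if a = 0 then 1 else 0) := by
  unfold zeroBits
  rw [Finset.range_add_one, Finset.filter_insert]
  have hcong : (Finset.range ℓ).filter (fun k => (b + 2^ℓ * a) / 2 ^ k % 2 = 0) =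
      (Finset.range ℓ).filter (fun k => b / 2 ^ k % 2 = 0) := by
    apply Finset.filter_congr
    intro k hk
    rw [bit_lo ℓ k a b (Finset.mem_range.mp hk) hb]
  have hhi : (b + 2^ℓ * a) / 2 ^ ℓ % 2 = a := by
    rw [hi_eq ℓ a b ha hb, Nat.mod_eq_of_lt ha]
  by_cases h0 : a = 0
  · rw [if_pos (by rw [hhi, h0]), Finset.card_insert_of_notMem (by
      simp [Finset.mem_filter]), hcong, if_pos h0]
  · rw [if_neg (by rw [hhi]; exact h0), hcong, if_neg h0]
    omega

lemma rowSum (ℓ : ℕ) (T : Matrix (Fin 2) (Fin 2) ℝ) (i : Fin (2^ℓ)) :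
    ∑ j : Fin (2^ℓ), kronPow ℓ T i j =
      (T 0 0 + T 0 1) ^ zeroBits ℓ i.val * (T 1 0 + T 1 1) ^ (ℓ - zeroBits ℓ i.val) := by
  induction ℓ with
  | zero =>
      have hcard : (Finset.univ : Finset (Fin (2^0))) = {i} := by
        apply Finset.eq_singleton_iff_unique_mem.mpr
        refine ⟨Finset.mem_univ i, fun j _ => Fin.ext ?_⟩
        have h1 := j.isLt; have h2 := i.isLt
        simp only [pow_zero] at h1 h2
        omega
      rw [hcard, Finset.sum_singleton]
      simp [kronPow, zeroBits, Matrix.one_apply]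
  | succ ℓ ih =>
      rw [sum_split]
      have key : ∀ (a : Fin 2) (b : Fin (2^ℓ)),
          kronPow (ℓ+1) T i ⟨b.val + 2^ℓ * a.val, mem_bound ℓ a b⟩ =
          T ⟨i.val / 2 ^ ℓ, Nat.div_lt_of_lt_mul (pow_succ 2 ℓ ▸ i.isLt)⟩ a *
          kronPow ℓ T ⟨i.val % 2 ^ ℓ, Nat.mod_lt _ (by positivity)⟩ b := by
        intro a b
        show T _ _ * kronPow ℓ T _ _ = _
        congr 1
        · congr 1
          exact Fin.ext (hi_eq ℓ a.val b.val a.isLt b.isLt)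
        · congr 1
          exact Fin.ext (lo_eq ℓ a.val b.val b.isLt)
      simp only [key, ← Finset.mul_sum, ih]
      rw [Fin.sum_univ_two]
      set ihi : Fin 2 := ⟨i.val / 2 ^ ℓ, Nat.div_lt_of_lt_mul (pow_succ 2 ℓ ▸ i.isLt)⟩ with hihi
      have hdecomp : i.val = i.val % 2^ℓ + 2^ℓ * (i.val / 2^ℓ) := (Nat.mod_add_div _ _).symm
      have hz : zeroBits (ℓ+1) i.val =
          zeroBits ℓ (i.val % 2^ℓ) + (if i.val / 2^ℓ = 0 then 1 else 0) := by
        conv_lhs => rw [hdecomp]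
        exact zeroBits_split ℓ (i.val / 2^ℓ) (i.val % 2^ℓ) ihi.isLt
          (Nat.mod_lt _ (by positivity))
      have hle := zeroBits_le ℓ (i.val % 2^ℓ)
      set z := zeroBits ℓ (i.val % 2^ℓ) with hzdef
      by_cases h0 : i.val / 2^ℓ = 0
      · have : ihi = 0 := Fin.ext h0
        rw [this, hz, if_pos h0]
        have h1 : ℓ + 1 - (z + 1) = ℓ - z := by omega
        rw [h1, pow_succ]
        ring
      · have hlt : i.val / 2^ℓ < 2 := Nat.div_lt_of_lt_mul (pow_succ 2 ℓ ▸ i.isLt)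
        have h1 : i.val / 2^ℓ = 1 :=
          Nat.le_antisymm (Nat.lt_succ_iff.mp hlt) (Nat.one_le_iff_ne_zero.mpr h0)
        have : ihi = 1 := Fin.ext h1
        rw [this, hz, if_neg h0, Nat.add_zero]
        have h2 : ℓ + 1 - z = (ℓ - z) + 1 := by omega
        rw [h2, pow_succ]
        ring

lemma kronPow_transpose (ℓ : ℕ) (T : Matrix (Fin 2) (Fin 2) ℝ) (i j : Fin (2^ℓ)) :
    kronPow ℓ T.transpose i j = kronPow ℓ T j i := by
  induction ℓ with
  | zero => simp [kronPow, Matrix.one_apply, eq_comm]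
  | succ ℓ ih =>
      show T.transpose _ _ * kronPow ℓ T.transpose _ _ = T _ _ * kronPow ℓ T _ _
      rw [Matrix.transpose_apply, ih]

lemma clSum (ℓ : ℕ) (a b : ℝ) :
    ∑ j : Fin (2^ℓ), a ^ zeroBits ℓ j.val * b ^ (ℓ - zeroBits ℓ j.val) = (a + b) ^ ℓ := by
  induction ℓ with
  | zero => simp [zeroBits]
  | succ ℓ ih =>
      rw [sum_split]
      have key : ∀ (x : Fin 2) (y : Fin (2^ℓ)),
          a ^ zeroBits (ℓ+1) (((⟨y.val + 2^ℓ * x.val, mem_bound ℓ x y⟩ : Fin (2^(ℓ+1)))).val)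
            * b ^ (ℓ + 1 - zeroBits (ℓ+1) ((⟨y.val + 2^ℓ * x.val, mem_bound ℓ x y⟩ :
              Fin (2^(ℓ+1)))).val) =
          (if x = 0 then a else b) * (a ^ zeroBits ℓ y.val * b ^ (ℓ - zeroBits ℓ y.val)) := by
        intro x y
        have hz := zeroBits_split ℓ x.val y.val x.isLt y.isLt
        have hle := zeroBits_le ℓ y.val
        by_cases h0 : x = 0
        · have h0' : x.val = 0 := by rw [h0]; rfl
          have hz' : zeroBits (ℓ+1) (y.val + 2^ℓ * x.val) = zeroBits ℓ y.val + 1 := by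
            rw [hz, if_pos h0']
          simp only [Fin.val_mk, hz', if_pos h0]
          have : ℓ + 1 - (zeroBits ℓ y.val + 1) = ℓ - zeroBits ℓ y.val := by omega
          rw [this, pow_succ]
          ring
        · have h0' : x.val ≠ 0 := fun h => h0 (Fin.ext h)
          have hz' : zeroBits (ℓ+1) (y.val + 2^ℓ * x.val) = zeroBits ℓ y.val := by
            rw [hz, if_neg h0', Nat.add_zero]
          simp only [Fin.val_mk, hz', if_neg h0]
          have : ℓ + 1 - zeroBits ℓ y.val = (ℓ - zeroBits ℓ y.val) + 1 := by omega
          rw [this, pow_succ]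
          ring
      simp only [key, ← Finset.mul_sum, ih]
      rw [Fin.sum_univ_two]
      simp only [if_true, if_neg (show (1 : Fin 2) ≠ 0 by decide), if_pos rfl]
      rw [pow_succ]
      ring

theorem skg_cl_same_marginals (ℓ : ℕ) (T : Matrix (Fin 2) (Fin 2) ℝ)
    (hpos : ∀ a b, 0 < T a b)
    (hsum : T 0 0 + T 0 1 + T 1 0 + T 1 1 = 1) :
    (∀ i : Fin (2 ^ ℓ), ∑ j : Fin (2 ^ ℓ), kronPow ℓ T i j =
        ∑ j : Fin (2 ^ ℓ),
          (T 0 0 + T 0 1) ^ zeroBits ℓ i.val * (T 1 0 + T 1 1) ^ (ℓ - zeroBits ℓ i.val) *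
          (T 0 0 + T 1 0) ^ zeroBits ℓ j.val * (T 0 1 + T 1 1) ^ (ℓ - zeroBits ℓ j.val)) ∧
      (∀ j : Fin (2 ^ ℓ), ∑ i : Fin (2 ^ ℓ), kronPow ℓ T i j =
        ∑ i : Fin (2 ^ ℓ),
          (T 0 0 + T 0 1) ^ zeroBits ℓ i.val * (T 1 0 + T 1 1) ^ (ℓ - zeroBits ℓ i.val) *
          (T 0 0 + T 1 0) ^ zeroBits ℓ j.val * (T 0 1 + T 1 1) ^ (ℓ - zeroBits ℓ j.val)) := by
  constructor
  · intro i
    rw [rowSum]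
    have : ∀ j : Fin (2^ℓ),
        (T 0 0 + T 0 1) ^ zeroBits ℓ i.val * (T 1 0 + T 1 1) ^ (ℓ - zeroBits ℓ i.val) *
          (T 0 0 + T 1 0) ^ zeroBits ℓ j.val * (T 0 1 + T 1 1) ^ (ℓ - zeroBits ℓ j.val) =
        ((T 0 0 + T 0 1) ^ zeroBits ℓ i.val * (T 1 0 + T 1 1) ^ (ℓ - zeroBits ℓ i.val)) *
          ((T 0 0 + T 1 0) ^ zeroBits ℓ j.val * (T 0 1 + T 1 1) ^ (ℓ - zeroBits ℓ j.val)) := by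
      intro j; ring
    simp only [this, ← Finset.mul_sum, clSum]
    have h1 : T 0 0 + T 1 0 + (T 0 1 + T 1 1) = 1 := by linarith
    rw [h1, one_pow, mul_one]
  · intro j
    have : ∀ i : Fin (2^ℓ), kronPow ℓ T i j = kronPow ℓ T.transpose j i := fun i =>
      (kronPow_transpose ℓ T j i).symm
    simp only [this]
    rw [rowSum]
    simp only [Matrix.transpose_apply]
    have : ∀ i : Fin (2^ℓ),
        (T 0 0 + T 0 1) ^ zeroBits ℓ i.val * (T 1 0 + T 1 1) ^ (ℓ - zeroBits ℓ i.val) *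
          (T 0 0 + T 1 0) ^ zeroBits ℓ j.val * (T 0 1 + T 1 1) ^ (ℓ - zeroBits ℓ j.val) =
        ((T 0 0 + T 0 1) ^ zeroBits ℓ i.val * (T 1 0 + T 1 1) ^ (ℓ - zeroBits ℓ i.val)) *
          ((T 0 0 + T 1 0) ^ zeroBits ℓ j.val * (T 0 1 + T 1 1) ^ (ℓ - zeroBits ℓ j.val)) := by
      intro i; ring
    simp only [this, ← Finset.sum_mul, clSum]
    have h1 : T 0 0 + T 0 1 + (T 1 0 + T 1 1) = 1 := by linarith
    rw [h1, one_pow, one_mul]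
end
end
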